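/- For every positive natural number n and every m with 0 ≤ m < n, m is regular modulo n if and only if gcd(m, n) is a unitary divisor of n. -/

import Mathlib

/-- An integer `m` is regular modulo `n` if `m^2 * x ≡ m (mod n)` for some integer `x`. -/
def IsRegularMod (n : ℕ) (m : ℤ) : Prop := ∃ x : ℤ, m ^ 2 * x ≡ m [ZMOD (n : ℤ)]

/-- `d` is a unitary divisor of `n`. -/
def UnitaryDivisor (d n : ℕ) : Prop := 0 < d ∧ d ∣ n ∧ Nat.gcd d (n / d) = 1

theorem isRegularMod_iff_gcd_unitaryDivisor (n : ℕ) (hn : 0 < n) (m : ℕ) (hm : m < n) :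
    IsRegularMod n (m : ℤ) ↔ UnitaryDivisor (Nat.gcd m n) n := by
  set d := Nat.gcd m n with hd
  have hd0 : 0 < d := Nat.gcd_pos_of_pos_right m hn
  have hdn : d ∣ n := Nat.gcd_dvd_right m n
  have hdm : d ∣ m := Nat.gcd_dvd_left m n
  constructor
  · rintro ⟨x, hx⟩
    refine ⟨hd0, hdn, ?_⟩
    by_contra hg
    obtain ⟨p, hp, hpd, hpnd⟩ := Nat.Prime.not_coprime_iff_dvd.mp hg
    set a := n.factorization p with ha
    have hpa : p ^ a ∣ n := Nat.ordProj_dvd n p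
    have hdvd : (n : ℤ) ∣ (m : ℤ) * ((m : ℤ) * x - 1) := by
      have h := Int.ModEq.dvd hx
      have : (m : ℤ) - (m : ℤ) ^ 2 * x = -((m : ℤ) * ((m : ℤ) * x - 1)) := by ring
      rw [this] at h
      exact (dvd_neg).mp h
    have hpm : (p : ℤ) ∣ (m : ℤ) := Int.natCast_dvd_natCast.mpr (hpd.trans hdm)
    have hnd1 : ¬ (p : ℤ) ∣ ((m : ℤ) * x - 1) := by
      intro h
      have : (p : ℤ) ∣ 1 := by
        have h2 : (p : ℤ) ∣ (m : ℤ) * x := hpm.mul_right x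
        have := dvd_sub h2 h
        simpa using this
      have h1 := Int.le_of_dvd one_pos this
      have h2 := hp.two_le
      omega
    have hcop : IsCoprime ((p : ℤ) ^ a) ((m : ℤ) * x - 1) :=
      (((Nat.prime_iff_prime_int.mp hp).coprime_iff_not_dvd).mpr hnd1).pow_left
    have hpam : ((p : ℤ) ^ a) ∣ (m : ℤ) := by
      have h : ((p : ℤ) ^ a) ∣ (m : ℤ) * ((m : ℤ) * x - 1) :=
        dvd_trans (by exact_mod_cast Int.natCast_dvd_natCast.mpr hpa) hdvd
      exact hcop.dvd_of_dvd_mul_right h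
    have hpamN : p ^ a ∣ m := by exact_mod_cast hpam
    have hpadN : p ^ a ∣ d := Nat.dvd_gcd hpamN hpa
    have hfin : p ^ (a + 1) ∣ n := by
      have : p ^ a * p ∣ d * (n / d) := mul_dvd_mul hpadN hpnd
      rwa [Nat.mul_div_cancel' hdn, ← pow_succ] at this
    exact Nat.pow_succ_factorization_not_dvd hn.ne' hp hfin
  · rintro ⟨-, -, hcop⟩
    have hmn' : Nat.Coprime m (n / d) := by
      have h1 : Nat.gcd m (n / d) ∣ d :=
        Nat.dvd_gcd (Nat.gcd_dvd_left _ _)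
          ((Nat.gcd_dvd_right _ _).trans (Nat.div_dvd_of_dvd hdn))
      exact Nat.dvd_one.mp (hcop ▸ Nat.dvd_gcd h1 (Nat.gcd_dvd_right _ _))
    have hcopZ : IsCoprime (m : ℤ) ((n / d : ℕ) : ℤ) := by
      rw [Int.isCoprime_iff_gcd_eq_one]
      rw [Int.gcd_natCast_natCast]; exact hmn'
    obtain ⟨u, v, huv⟩ := hcopZ
    refine ⟨u, ?_⟩
    have hn'dvd : ((n / d : ℕ) : ℤ) ∣ ((m : ℤ) * u - 1) := by
      refine ⟨-v, ?_⟩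
      have : u * (m : ℤ) + v * ((n / d : ℕ) : ℤ) = 1 := huv
      ring_nf
      linarith [this]
    have hndvd : (n : ℤ) ∣ (m : ℤ) * ((m : ℤ) * u - 1) := by
      have hdZ : (d : ℤ) ∣ (m : ℤ) := Int.natCast_dvd_natCast.mpr hdm
      have := mul_dvd_mul hdZ hn'dvd
      have heq : ((d : ℤ)) * ((n / d : ℕ) : ℤ) = (n : ℤ) := by
        exact_mod_cast congrArg (Nat.cast : ℕ → ℤ) (Nat.mul_div_cancel' hdn)
      rwa [heq] at this
    rw [Int.ModEq]
    have : (n : ℤ) ∣ (m : ℤ) - (m : ℤ) ^ 2 * u := by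
      have h2 : (m : ℤ) - (m : ℤ) ^ 2 * u = -((m : ℤ) * ((m : ℤ) * u - 1)) := by ring
      rw [h2]; exact dvd_neg.mpr hndvd
    exact (Int.modEq_iff_dvd.mpr this).symm.symm
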